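/- Let f be a complex polynomial of degree n with roots r₁,…,rₙ counted with multiplicity, and let ε > 0 be smaller than half the minimum distance between distinct roots of f. Then there exists δ > 0 such that any polynomial g of degree n with coefficients within δ of those of f has exactly m roots (with multiplicity) in the open disk of radius ε around r, where m is the multiplicity of r as a root of f, for each distinct root r of f. -/

import Mathlib

open Polynomial Filter Metric
open scoped Classical

lemma exists_vec_aux (n : ℕ) (s : Multiset ℂ) (h : Multiset.card s = n) :
    ∃ v : Fin n → ℂ, s = Multiset.map v Finset.univ.val := by
  have hl : s.toList.length = n := by simp [h]
  refine ⟨fun j => s.toList.get (Fin.cast hl.symm j), ?_⟩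
  have : Multiset.map (fun j : Fin n => s.toList.get (Fin.cast hl.symm j)) Finset.univ.val
      = ((List.ofFn fun j : Fin n => s.toList.get (Fin.cast hl.symm j)) : Multiset ℂ) := by
    rw [List.ofFn_eq_map]
    rfl
  rw [this]
  have : (List.ofFn fun j : Fin n => s.toList.get (Fin.cast hl.symm j)) = s.toList := by
    apply List.ext_get
    · simp [hl]
    · intro i h1 h2
      simp
  rw [this, Multiset.coe_toList]

lemma abs_sub_le_aux (a b c : ℂ) : ‖a - c‖ ≤ ‖a - b‖ + ‖b - c‖ := by
  simpa [Complex.dist_eq] using dist_triangle a b c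

set_option maxHeartbeats 1000000 in
lemma key_aux (n : ℕ) (f : Polynomial ℂ) (hf : f.natDegree = n)
    (ε : ℝ) (hε : 0 < ε) (r : ℂ) (hr : r ∈ f.roots)
    (hsep : ∀ r' ∈ f.roots, r' ≠ r → 2 * ε < ‖r' - r‖) :
    ∃ δ > (0 : ℝ), ∀ g : Polynomial ℂ, g.natDegree = n →
      (∀ i ≤ n, ‖f.coeff i - g.coeff i‖ < δ) →
      Multiset.card (g.roots.filter fun z => ‖z - r‖ < ε) =
        f.roots.count r := by
  by_contra hcon
  push_neg at hcon
  -- basic facts about f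
  have hf0 : f ≠ 0 := by
    intro h0; rw [h0] at hr; simp at hr
  have hn1 : 1 ≤ n := by
    by_contra hn
    push_neg at hn
    interval_cases n
    have := Multiset.card_pos_iff_exists_mem.2 ⟨r, hr⟩
    have hc := (Polynomial.card_roots' f).trans_eq hf
    omega
  set a : ℂ := f.coeff n with ha_def
  have ha : a ≠ 0 := by
    have : a = f.leadingCoeff := by rw [ha_def, Polynomial.leadingCoeff, hf]
    rw [this]
    exact Polynomial.leadingCoeff_ne_zero.2 hf0
  have haa : 0 < ‖a‖ := by
    exact norm_pos_iff.mpr ha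
  -- the bad sequence
  set δ : ℕ → ℝ := fun m => min (1 / (m + 1)) (‖a‖ / 2) with hδ_def
  have hδpos : ∀ m, 0 < δ m := fun m =>
    lt_min (by positivity) (by positivity)
  choose g hdeg hclose hbad using fun m => hcon (δ m) (hδpos m)
  have hg0 : ∀ m, g m ≠ 0 := by
    intro m h0
    have := hdeg m; rw [h0] at this; simp at this; omega
  -- leading coefficients
  set b : ℕ → ℂ := fun m => (g m).coeff n with hb_def
  have hblead : ∀ m, b m = (g m).leadingCoeff := by
    intro m; rw [hb_def, Polynomial.leadingCoeff, hdeg m]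
  have hbclose : ∀ m, ‖a - b m‖ < ‖a‖ / 2 :=
    fun m => lt_of_lt_of_le (hclose m n le_rfl) (min_le_right _ _)
  have hbbig : ∀ m, ‖a‖ / 2 ≤ ‖b m‖ := by
    intro m
    have h1 := hbclose m
    have h2 : ‖a‖ ≤ ‖a - b m‖ + ‖b m‖ := by
      simpa using norm_add_le (a - b m) (b m)
    linarith
  have hb0 : ∀ m, b m ≠ 0 := by
    intro m h0
    have := hbbig m; rw [h0] at this; simp at this; linarith
  -- roots of g m as vectors
  have hcard : ∀ m, Multiset.card (g m).roots = n := by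
    intro m
    rw [Polynomial.splits_iff_card_roots.1 (IsAlgClosed.splits (g m)), hdeg m]
  choose v hv using fun m => exists_vec_aux n (g m).roots (hcard m)
  -- uniform bound on roots
  obtain ⟨R, hR0, hR⟩ : ∃ R : ℝ, 0 ≤ R ∧ ∀ m j, ‖v m j‖ ≤ R := by
    set S : ℝ := (∑ i ∈ Finset.range n, ‖f.coeff i‖) + ‖a‖ / 2 with hS_def
    have hS0 : 0 ≤ S := by
      have h1 : 0 ≤ ∑ i ∈ Finset.range n, ‖f.coeff i‖ :=
        Finset.sum_nonneg fun i _ => norm_nonneg _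
      have h2 : 0 ≤ ‖a‖ := norm_nonneg _
      rw [hS_def]; linarith
    refine ⟨S / (‖a‖ / 2) + 1,
      add_nonneg (div_nonneg hS0 (by linarith)) zero_le_one, ?_⟩
    intro m j
    have hmemr : v m j ∈ (g m).roots := by
      rw [hv m]
      exact Multiset.mem_map_of_mem _ (by simp)
    have hroot : (g m).IsRoot (v m j) := Polynomial.isRoot_of_mem_roots hmemr
    have h1 : ‖v m j‖₊ < Polynomial.cauchyBound (g m) := hroot.norm_lt_cauchyBound (hg0 m)
    have hsup : ((((Finset.range (g m).natDegree).sup (fun i => ‖(g m).coeff i‖₊) : NNReal)) : ℝ) ≤ S := by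
      have hsup' : (Finset.range (g m).natDegree).sup (fun i => ‖(g m).coeff i‖₊) ≤ ⟨S, hS0⟩ := by
        apply Finset.sup_le
        intro i hi
        rw [hdeg m] at hi
        have hile : i ≤ n := le_of_lt (Finset.mem_range.1 hi)
        refine NNReal.coe_le_coe.1 ?_
        show ‖(g m).coeff i‖ ≤ S
        have hin : i ∈ Finset.range n := hi
        have h2 : ‖(g m).coeff i‖ ≤ ‖f.coeff i‖ + ‖a‖ / 2 := by
          have t1 := hclose m i hile
          have t2 : ‖(g m).coeff i‖ ≤
              ‖f.coeff i - (g m).coeff i‖ + ‖f.coeff i‖ := by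
            simpa [norm_sub_rev] using abs_sub_le_aux ((g m).coeff i) (f.coeff i) 0
          have t3 : δ m ≤ ‖a‖ / 2 := min_le_right _ _
          linarith
        have h3 : ‖f.coeff i‖ ≤ ∑ k ∈ Finset.range n, ‖f.coeff k‖ :=
          Finset.single_le_sum (f := fun k => ‖f.coeff k‖)
            (fun k _ => norm_nonneg _) hin
        rw [hS_def]
        simpa using by linarith
      calc ((((Finset.range (g m).natDegree).sup (fun i => ‖(g m).coeff i‖₊) : NNReal)) : ℝ)
          ≤ ((⟨S, hS0⟩ : NNReal) : ℝ) := NNReal.coe_le_coe.2 hsup'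
        _ = S := rfl
    have hcb : (Polynomial.cauchyBound (g m) : ℝ) ≤ S / (‖a‖ / 2) + 1 := by
      rw [Polynomial.cauchyBound]
      push_cast
      have hlead : ‖a‖ / 2 ≤ ‖(g m).leadingCoeff‖ := by
        rw [← hblead m]
        simpa using hbbig m
      have : ((((Finset.range (g m).natDegree).sup (fun i => ‖(g m).coeff i‖₊) : NNReal)) : ℝ) /
          ‖(g m).leadingCoeff‖ ≤ S / (‖a‖ / 2) :=
        div_le_div₀ hS0 hsup (by linarith) hlead
      linarith
    have : (‖v m j‖₊ : ℝ) < (Polynomial.cauchyBound (g m) : ℝ) := NNReal.coe_lt_coe.2 h1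
    have hnorm : ‖v m j‖ = (‖v m j‖₊ : ℝ) := by
      simp
    linarith
  -- convergent subsequence
  have hmem : ∀ m, v m ∈ Metric.closedBall (0 : Fin n → ℂ) R := by
    intro m
    rw [Metric.mem_closedBall, dist_pi_le_iff hR0]
    intro j
    simpa [Complex.dist_eq] using hR m j
  obtain ⟨w, -, φ, hφ, hconv⟩ :=
    tendsto_subseq_of_bounded (Metric.isBounded_closedBall (x := (0 : Fin n → ℂ)) (r := R)) hmem
  have hcoord : ∀ j, Tendsto (fun k => v (φ k) j) atTop (nhds (w j)) :=
    fun j => ((continuous_apply j).tendsto w).comp hconv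
  -- coefficient convergence
  have hcoeff : ∀ i ≤ n, Tendsto (fun m => (g m).coeff i) atTop (nhds (f.coeff i)) := by
    intro i hi
    rw [tendsto_iff_dist_tendsto_zero]
    refine squeeze_zero (fun m => dist_nonneg) (fun m => ?_) tendsto_one_div_add_atTop_nhds_zero_nat
    have := hclose m i hi
    have h1 : dist ((g m).coeff i) (f.coeff i) = ‖f.coeff i - (g m).coeff i‖ := by
      rw [dist_comm, Complex.dist_eq]
    rw [h1]
    exact le_of_lt (lt_of_lt_of_le this (min_le_left _ _))
  -- evaluation convergence (two ways)
  have heval1 : ∀ x : ℂ, Tendsto (fun m => (g m).eval x) atTop (nhds (f.eval x)) := by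
    intro x
    have hfe : f.eval x = ∑ i ∈ Finset.range (n + 1), f.coeff i * x ^ i :=
      Polynomial.eval_eq_sum_range' (by omega) x
    have hge : ∀ m, (g m).eval x = ∑ i ∈ Finset.range (n + 1), (g m).coeff i * x ^ i :=
      fun m => Polynomial.eval_eq_sum_range' (by rw [hdeg m]; omega) x
    simp only [hge, hfe]
    apply tendsto_finset_sum
    intro i hi
    exact (hcoeff i (by simpa using Nat.lt_succ_iff.1 (Finset.mem_range.1 hi))).mul tendsto_const_nhds
  have hgeval : ∀ m (x : ℂ), (g m).eval x = b m * ∏ j : Fin n, (x - v m j) := by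
    intro m x
    conv_lhs => rw [(IsAlgClosed.splits (g m)).eq_prod_roots]
    rw [Polynomial.eval_mul, Polynomial.eval_C, ← hblead m, hv m, Multiset.map_map,
      Polynomial.eval_multiset_prod, Multiset.map_map, Finset.prod_eq_multiset_prod]
    simp [Function.comp]
  have heval2 : ∀ x : ℂ, Tendsto (fun k => (g (φ k)).eval x) atTop
      (nhds (a * ∏ j : Fin n, (x - w j))) := by
    intro x
    simp only [hgeval]
    apply Tendsto.mul
    · exact (hcoeff n le_rfl).comp hφ.tendsto_atTop
    · exact tendsto_finset_prod _ (fun j _ => tendsto_const_nhds.sub (hcoord j))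
  -- identify the limit polynomial
  have hfactor : f = Polynomial.C a * ∏ j : Fin n, (Polynomial.X - Polynomial.C (w j)) := by
    apply Polynomial.funext
    intro x
    have h1 := (heval1 x).comp hφ.tendsto_atTop
    have h2 := heval2 x
    have := tendsto_nhds_unique h1 h2
    rw [this]
    simp [Polynomial.eval_prod]
  have hroots : f.roots = Multiset.map w Finset.univ.val := by
    rw [hfactor, Polynomial.roots_C_mul _ ha, Finset.prod_eq_multiset_prod]
    have hmm : Multiset.map (fun j : Fin n => Polynomial.X - Polynomial.C (w j)) Finset.univ.val
        = Multiset.map (fun t => Polynomial.X - Polynomial.C t) (Multiset.map w Finset.univ.val) := by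
      rw [Multiset.map_map]
      rfl
    rw [hmm, Polynomial.roots_multiset_prod_X_sub_C]
  have hwmem : ∀ j, w j ∈ f.roots := by
    intro j; rw [hroots]; exact Multiset.mem_map_of_mem w (by simp)
  -- pick a far index along the subsequence
  have hev : ∀ᶠ k in atTop, ∀ j, dist (v (φ k) j) (w j) < ε := by
    rw [eventually_all]
    intro j
    exact (hcoord j) (Metric.ball_mem_nhds _ hε)
  obtain ⟨K, hK⟩ := hev.exists
  -- conclude: the count for g (φ K) is exactly the multiplicity
  apply hbad (φ K)
  have hpred : ∀ j : Fin n, (‖v (φ K) j - r‖ < ε) ↔ (r = w j) := by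
    intro j
    have hd : ‖v (φ K) j - w j‖ < ε := by
      simpa [Complex.dist_eq] using hK j
    constructor
    · intro h
      by_contra hne
      have hsep' := hsep (w j) (hwmem j) (fun hh => hne hh.symm)
      have htri : ‖w j - r‖ ≤ ‖w j - v (φ K) j‖ + ‖v (φ K) j - r‖ := by
        simpa using abs_sub_le_aux (w j) (v (φ K) j) r
      rw [norm_sub_rev] at hd
      linarith
    · intro h
      rw [h]
      exact hd
  rw [hv (φ K), hroots, Multiset.count_map]
  rw [Multiset.filter_map, Multiset.card_map]
  congr 1
  apply Multiset.filter_congr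
  intro j _
  simpa using hpred j

theorem multiplicity_preserved
    (n : ℕ) (f : Polynomial ℂ) (hf : f.natDegree = n)
    (ε : ℝ) (hε : 0 < ε)
    (hsep : ∀ r ∈ f.roots, ∀ r' ∈ f.roots, r ≠ r' → 2 * ε < ‖r - r'‖) :
    ∃ δ > (0 : ℝ), ∀ g : Polynomial ℂ, g.natDegree = n →
      (∀ i ≤ n, ‖f.coeff i - g.coeff i‖ < δ) →
      ∀ r ∈ f.roots,
        Multiset.card (g.roots.filter fun z => ‖z - r‖ < ε) =
          f.roots.count r := by
  have H : ∀ r : ℂ, ∃ δ : ℝ, 0 < δ ∧ (r ∈ f.roots → ∀ g : Polynomial ℂ, g.natDegree = n →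
      (∀ i ≤ n, ‖f.coeff i - g.coeff i‖ < δ) →
      Multiset.card (g.roots.filter fun z => ‖z - r‖ < ε) = f.roots.count r) := by
    intro r
    by_cases hr : r ∈ f.roots
    · obtain ⟨δ, hδ, h⟩ := key_aux n f hf ε hε r hr
        (fun r' hr' hne => hsep r' hr' r hr hne)
      exact ⟨δ, hδ, fun _ => h⟩
    · exact ⟨1, one_pos, fun hr' => absurd hr' hr⟩
  choose d hd1 hd2 using H
  by_cases h0 : f.roots = 0
  · refine ⟨1, one_pos, ?_⟩
    intro g _ _ r hrr
    rw [h0] at hrr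
    simp at hrr
  · have hS : f.roots.toFinset.Nonempty := by
      obtain ⟨r, hr⟩ := Multiset.exists_mem_of_ne_zero h0
      exact ⟨r, Multiset.mem_toFinset.2 hr⟩
    refine ⟨f.roots.toFinset.inf' hS d, ?_, ?_⟩
    · exact (Finset.lt_inf'_iff hS).2 fun r _ => hd1 r
    · intro g hg hclose r hrr
      apply hd2 r hrr g hg
      intro i hi
      exact lt_of_lt_of_le (hclose i hi) (Finset.inf'_le d (Multiset.mem_toFinset.2 hrr))
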